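/- Let G be a finite connected multigraph. Then every edge of G belongs to at most one simple cycle (i.e., G is a quasi-cactus) if and only if λ(v, w) ∈ {1, 2} for every pair of distinct vertices v, w of G. -/

import Mathlib

set_option autoImplicit false

/-! ## Multigraphs -/

/-- A multigraph: a vertex type `V`, an edge type `E`, and an assignment to each edge of
its unordered pair of endpoints.  Loops and parallel edges are allowed. -/
structure Multigraph (V E : Type) where
  ends : E → Sym2 V

namespace Multigraph

variable {V E : Type}

/-- `G.ReachAvoid F u v` : `v` can be reached from `u` by a walk using no edge of `F`. -/
inductive ReachAvoid (G : Multigraph V E) (F : Set E) : V → V → Prop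
  | refl (v : V) : ReachAvoid G F v v
  | tail {u v w : V} (e : E) (he : e ∉ F) (hvw : G.ends e = s(v, w))
      (h : ReachAvoid G F u v) : ReachAvoid G F u w

/-- A multigraph is connected if any two vertices are joined by a walk. -/
def Connected (G : Multigraph V E) : Prop := ∀ u v : V, G.ReachAvoid ∅ u v

/-- `F` is a set of edges whose deletion disconnects `v` from `w`. -/
def IsEdgeCut (G : Multigraph V E) (v w : V) (F : Set E) : Prop := ¬ G.ReachAvoid F v w

/-- Edge connectivity `λ(v, w)`: the minimum number of edges whose deletion
disconnects `v` from `w`. -/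
noncomputable def edgeConn (G : Multigraph V E) (v w : V) : ℕ :=
  sInf {k : ℕ | ∃ F : Finset E, F.card = k ∧ G.IsEdgeCut v w ↑F}

/-- Walks in a multigraph, recorded together with the edges they traverse. -/
inductive Walk (G : Multigraph V E) : V → V → Type
  | nil (v : V) : Walk G v v
  | cons {u v w : V} (e : E) (huv : G.ends e = s(u, v)) (p : Walk G v w) : Walk G u w

namespace Walk

variable {G : Multigraph V E}

/-- The list of edges traversed by a walk. -/
def edges : ∀ {u v : V}, G.Walk u v → List E
  | _, _, .nil _ => []
  | _, _, .cons e _ p => e :: edges p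

/-- The list of vertices visited by a walk (including both endpoints). -/
def verts : ∀ {u v : V}, G.Walk u v → List V
  | _, v, .nil _ => [v]
  | u, _, .cons _ _ p => u :: verts p

/-- A walk is a path if it visits no vertex twice. -/
def IsPath {u v : V} (p : G.Walk u v) : Prop := p.verts.Nodup

end Walk

/-- `S` is the edge set of a simple cycle of `G`: a nonempty closed walk with no repeated
edges and no repeated vertices (other than the final return to the starting point).
A loop is a simple cycle of length one. -/
def IsSimpleCycleOn [DecidableEq E] (G : Multigraph V E) (S : Finset E) : Prop :=
  ∃ (v : V) (p : G.Walk v v),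
    p.edges ≠ [] ∧ p.edges.Nodup ∧ p.verts.dropLast.Nodup ∧ p.edges.toFinset = S

/-- A cactus: a connected multigraph in which every edge lies on exactly one simple cycle
(simple cycles being identified with their edge sets). -/
def IsCactus [DecidableEq E] (G : Multigraph V E) : Prop :=
  G.Connected ∧ ∀ e : E, ∃! S : Finset E, G.IsSimpleCycleOn S ∧ e ∈ S

/-- Two-edge-connected: connected, and still connected after deleting any single edge. -/
def TwoEdgeConnected (G : Multigraph V E) : Prop :=
  G.Connected ∧ ∀ (e : E) (u v : V), G.ReachAvoid {e} u v

/-- The quotient multigraph by a partition (setoid) of the vertices: the vertices are the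
blocks, and each edge joins the blocks of its original endpoints. -/
def quot (G : Multigraph V E) (σ : Setoid V) : Multigraph (Quotient σ) E :=
  ⟨fun e => (G.ends e).map (Quotient.mk σ)⟩

/-- Degree of a vertex: the number of edge-incidences at it (loops count twice). -/
def degree [DecidableEq V] [Fintype E] (G : Multigraph V E) (v : V) : ℕ :=
  ∑ e : E,
    Sym2.lift
      ⟨fun a b => (if a = v then 1 else 0) + (if b = v then 1 else 0),
        fun _ _ => add_comm _ _⟩ (G.ends e)

/-- A leaf is a vertex of degree one. -/
def IsLeaf [DecidableEq V] [Fintype E] (G : Multigraph V E) (v : V) : Prop :=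
  G.degree v = 1

/-- A tree: a connected multigraph with no simple cycles. -/
def IsTree [DecidableEq E] (G : Multigraph V E) : Prop :=
  G.Connected ∧ ∀ S : Finset E, ¬ G.IsSimpleCycleOn S

end Multigraph

/-- An embedding of the multigraph `H` into `G`, realizing `H` as a subgraph of `G`. -/
structure Multigraph.Embedding {W F V E : Type} (H : Multigraph W F) (G : Multigraph V E) where
  vmap : W → V
  emap : F → E
  vmap_inj : Function.Injective vmap
  emap_inj : Function.Injective emap
  ends_map : ∀ f : F, G.ends (emap f) = (H.ends f).map vmap

/-! ## Multidigraphs -/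

/-- A multidigraph: vertex type `V`, edge type `E`, and source and target maps. -/
structure Multidigraph (V E : Type) where
  src : E → V
  tgt : E → V

namespace Multidigraph

variable {V E : Type}

/-- The underlying multigraph of a multidigraph. -/
def toMultigraph (D : Multidigraph V E) : Multigraph V E :=
  ⟨fun e => s(D.src e, D.tgt e)⟩

/-- Directed walks in a multidigraph. -/
inductive DiWalk (D : Multidigraph V E) : V → V → Type
  | nil (v : V) : DiWalk D v v
  | cons {u v w : V} (e : E) (hs : D.src e = u) (ht : D.tgt e = v)
      (p : DiWalk D v w) : DiWalk D u w

namespace DiWalk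

variable {D : Multidigraph V E}

/-- The list of edges traversed by a directed walk. -/
def edges : ∀ {u v : V}, D.DiWalk u v → List E
  | _, _, .nil _ => []
  | _, _, .cons e _ _ p => e :: edges p

/-- The list of vertices visited by a directed walk. -/
def verts : ∀ {u v : V}, D.DiWalk u v → List V
  | _, v, .nil _ => [v]
  | u, _, .cons _ _ _ p => u :: verts p

end DiWalk

/-- `S` is the edge set of a simple directed cycle of `D`. -/
def IsDiCycleOn [DecidableEq E] (D : Multidigraph V E) (S : Finset E) : Prop :=
  ∃ (v : V) (p : D.DiWalk v v),
    p.edges ≠ [] ∧ p.edges.Nodup ∧ p.verts.dropLast.Nodup ∧ p.edges.toFinset = S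

/-- An oriented cactus: the underlying multigraph is a cactus and each of its simple
cycles (pads) is a directed cycle. -/
def IsOrientedCactus [DecidableEq E] (D : Multidigraph V E) : Prop :=
  D.toMultigraph.IsCactus ∧
    ∀ S : Finset E, D.toMultigraph.IsSimpleCycleOn S → D.IsDiCycleOn S

/-- The quotient multidigraph by a partition (setoid) of the vertices. -/
def quot (D : Multidigraph V E) (σ : Setoid V) : Multidigraph (Quotient σ) E where
  src := fun e => Quotient.mk σ (D.src e)
  tgt := fun e => Quotient.mk σ (D.tgt e)

/-- Indegree of a vertex: the number of edges with target `v`. -/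
def indeg [DecidableEq V] [Fintype E] (D : Multidigraph V E) (v : V) : ℕ :=
  (Finset.univ.filter fun e => D.tgt e = v).card

/-- Outdegree of a vertex: the number of edges with source `v`. -/
def outdeg [DecidableEq V] [Fintype E] (D : Multidigraph V E) (v : V) : ℕ :=
  (Finset.univ.filter fun e => D.src e = v).card

end Multidigraph

/-- An embedding of the multidigraph `H` into `G`, realizing `H` as a subgraph of `G`. -/
structure Multidigraph.Embedding {W F V E : Type}
    (H : Multidigraph W F) (G : Multidigraph V E) where
  vmap : W → V
  emap : F → E
  vmap_inj : Function.Injective vmap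
  emap_inj : Function.Injective emap
  src_map : ∀ f : F, G.src (emap f) = vmap (H.src f)
  tgt_map : ∀ f : F, G.tgt (emap f) = vmap (H.tgt f)

/-! ## Cycle graphs and non-crossing partitions -/

/-- The cycle graph of length `n`: vertices `Fin n`, edges `Fin n`, edge `i` joining
`v i` and `v (i+1)` (indices mod `n`). -/
def cycleGraph (n : ℕ) [NeZero n] : Multigraph (Fin n) (Fin n) :=
  ⟨fun i => s(i, i + 1)⟩

/-- The cycle graph of length `n` in which each edge carries an orientation:
edge `i` is oriented counterclockwise (from `v i` to `v (i+1)`) if `orient i = true`,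
and clockwise otherwise. -/
def cycleDigraph (n : ℕ) [NeZero n] (orient : Fin n → Bool) : Multidigraph (Fin n) (Fin n) where
  src := fun i => if orient i then i else i + 1
  tgt := fun i => if orient i then i + 1 else i

/-- A relation (e.g. a partition) on `Fin m` is non-crossing if there are no indices
`i₁ < i₂ < i₃ < i₄` with `i₁, i₃` in one block and `i₂, i₄` in a different block. -/
def NonCrossingRel {m : ℕ} (r : Fin m → Fin m → Prop) : Prop :=
  ¬ ∃ i₁ i₂ i₃ i₄ : Fin m, i₁ < i₂ ∧ i₂ < i₃ ∧ i₃ < i₄ ∧ r i₁ i₃ ∧ r i₂ i₄ ∧ ¬ r i₁ i₂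

/-- The union of a partition `σ` of the vertices `v₁, …, vₙ` (at the even positions) and
a partition `κ` of the edges `e₁, …, eₙ` (at the odd positions) of a cycle, as a relation
on the `2n` interlaced points `v₁, e₁, v₂, e₂, …, vₙ, eₙ`. -/
def interRel {n : ℕ} (σ κ : Setoid (Fin n)) (x y : Fin (2 * n)) : Prop :=
  (x.val % 2 = 0 ∧ y.val % 2 = 0 ∧
    σ.r ⟨x.val / 2, by have := x.isLt; omega⟩ ⟨y.val / 2, by have := y.isLt; omega⟩) ∨
  (x.val % 2 = 1 ∧ y.val % 2 = 1 ∧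
    κ.r ⟨x.val / 2, by have := x.isLt; omega⟩ ⟨y.val / 2, by have := y.isLt; omega⟩)

/-- `κ` is the Kreweras complement of `σ`: the largest partition of the edges such that
the union `σ ∪ κ` is non-crossing with respect to the interlaced (cyclic) order. -/
def IsKrewerasComplement {n : ℕ} (σ κ : Setoid (Fin n)) : Prop :=
  NonCrossingRel (interRel σ κ) ∧
    ∀ κ' : Setoid (Fin n), NonCrossingRel (interRel σ κ') → κ' ≤ κ

open Classical in
/-- The block of the partition `κ` containing `i`, as a finite set. -/
noncomputable def setoidClass {n : ℕ} (κ : Setoid (Fin n)) (i : Fin n) : Finset (Fin n) :=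
  Finset.univ.filter fun j => κ.r i j

open Fin.NatCast in
/-- `j` is the next element of `B` encountered strictly after `i` in the cyclic order of
`Fin n` (if `B = {i}` then `j = i` itself, one full turn later). -/
def CyclicNextIn {n : ℕ} [NeZero n] (B : Finset (Fin n)) (i j : Fin n) : Prop :=
  i ∈ B ∧ j ∈ B ∧ ∃ d : ℕ, 0 < d ∧ d ≤ n ∧ j = i + (d : Fin n) ∧
    ∀ d' : ℕ, 0 < d' → d' < d → i + (d' : Fin n) ∉ B

/-! ## Wedges of two (di)graphs at their roots -/

/-- The canonical map from the vertices of `t'` into the wedge vertex type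
`V ⊕ {x : V' // x ≠ ρ'}`, sending the root `ρ'` to (the image of) `ρ`. -/
def wedgeJ {V V' : Type} [DecidableEq V'] (ρ : V) (ρ' : V') :
    V' → V ⊕ {x : V' // x ≠ ρ'} :=
  fun x => if h : x = ρ' then Sum.inl ρ else Sum.inr ⟨x, h⟩

/-- The wedge of two multigraphs `t`, `t'` obtained by identifying `ρ ∈ t` with `ρ' ∈ t'`. -/
def Multigraph.wedge {V E V' E' : Type} [DecidableEq V']
    (t : Multigraph V E) (t' : Multigraph V' E') (ρ : V) (ρ' : V') :
    Multigraph (V ⊕ {x : V' // x ≠ ρ'}) (E ⊕ E') :=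
  ⟨fun e =>
    match e with
    | Sum.inl e => (t.ends e).map Sum.inl
    | Sum.inr e => (t'.ends e).map (wedgeJ ρ ρ')⟩

/-- The wedge of two multidigraphs `t`, `t'` obtained by identifying `ρ ∈ t` with `ρ' ∈ t'`. -/
def Multidigraph.wedge {V E V' E' : Type} [DecidableEq V']
    (t : Multidigraph V E) (t' : Multidigraph V' E') (ρ : V) (ρ' : V') :
    Multidigraph (V ⊕ {x : V' // x ≠ ρ'}) (E ⊕ E') where
  src := fun e =>
    match e with
    | Sum.inl e => Sum.inl (t.src e)
    | Sum.inr e => wedgeJ ρ ρ' (t'.src e)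
  tgt := fun e =>
    match e with
    | Sum.inl e => Sum.inl (t.tgt e)
    | Sum.inr e => wedgeJ ρ ρ' (t'.tgt e)

/-! ## Flowers (a cycle with graphs attached) and stars (trees wedged at a common root) -/

/-- The canonical map from the vertices of the `i`-th attached graph into the flower,
sending the basepoint `b i` to the cycle vertex `i`. -/
def flowerJ {n : ℕ} {W : Fin n → Type} [∀ i, DecidableEq (W i)]
    (b : ∀ i, W i) (i : Fin n) :
    W i → Fin n ⊕ (Σ i, {x : W i // x ≠ b i}) :=
  fun x => if h : x = b i then Sum.inl i else Sum.inr ⟨i, x, h⟩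

/-- The flower: a cycle of length `n` with the multigraph `d i` attached at the cycle
vertex `i` via its basepoint `b i`; the attached graphs are disjoint except through the
cycle, and `d i` meets the cycle exactly in the vertex `i`. -/
def flowerGraph {n : ℕ} [NeZero n] {W F : Fin n → Type} [∀ i, DecidableEq (W i)]
    (d : ∀ i, Multigraph (W i) (F i)) (b : ∀ i, W i) :
    Multigraph (Fin n ⊕ (Σ i, {x : W i // x ≠ b i})) (Fin n ⊕ (Σ i, F i)) :=
  ⟨fun e =>
    match e with
    | Sum.inl k => s(Sum.inl k, Sum.inl (k + 1))
    | Sum.inr ⟨i, f⟩ => ((d i).ends f).map (flowerJ b i)⟩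

/-- The canonical map from the vertices of the `i`-th tree into the star, sending the
root `r i` to the common amalgamated root. -/
def starJ {n : ℕ} {W : Fin n → Type} [∀ i, DecidableEq (W i)]
    (r : ∀ i, W i) (i : Fin n) :
    W i → Unit ⊕ (Σ i, {x : W i // x ≠ r i}) :=
  fun x => if h : x = r i then Sum.inl () else Sum.inr ⟨i, x, h⟩

/-- The star: the disjoint union of the multigraphs `t i` with all the roots `r i`
identified to a single vertex. -/
def starGraph {n : ℕ} {W F : Fin n → Type} [∀ i, DecidableEq (W i)]
    (t : ∀ i, Multigraph (W i) (F i)) (r : ∀ i, W i) :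
    Multigraph (Unit ⊕ (Σ i, {x : W i // x ≠ r i})) (Σ i, F i) :=
  ⟨fun e => ((t e.1).ends e.2).map (starJ r e.1)⟩

/-! ## Graphs of matrices -/

/-- The partition of `V` identifying the input `vin` with the output `vout` (and nothing
else). -/
def rootSetoid {V : Type} (vin vout : V) : Setoid V where
  r a b := a = b ∨ ((a = vin ∨ a = vout) ∧ (b = vin ∨ b = vout))
  iseqv := by
    constructor
    · intro x; exact Or.inl rfl
    · rintro x y (rfl | ⟨hx, hy⟩)
      · exact Or.inl rfl
      · exact Or.inr ⟨hy, hx⟩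
    · rintro x y z (rfl | ⟨hx, hy⟩) (rfl | ⟨hy', hz⟩)
      · exact Or.inl rfl
      · exact Or.inr ⟨hy', hz⟩
      · exact Or.inr ⟨hx, hy⟩
      · exact Or.inr ⟨hx, hz⟩

/-- The graph of matrices `Z_g(A₁, …, A_K)` associated to a bi-rooted multidigraph `g`
with input `vin`, output `vout` and edge ordering `o`. -/
noncomputable def graphOfMatrices {V E : Type} [Fintype V] [Fintype E] [DecidableEq V] {K N : ℕ}
    (g : Multidigraph V E) (vin vout : V) (o : E ≃ Fin K)
    (A : Fin K → Matrix (Fin N) (Fin N) ℂ) : Matrix (Fin N) (Fin N) ℂ :=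
  Matrix.of fun i j =>
    ∑ φ : V → Fin N,
      if φ vout = i ∧ φ vin = j then ∏ e : E, A (o e) (φ (g.tgt e)) (φ (g.src e)) else 0

/-! ## Set partitions as finite set systems -/

/-- `P` is a partition of the (finite) type `V`: its blocks are nonempty and every
element of `V` lies in exactly one block. -/
def IsPartitionOf (V : Type) [DecidableEq V] (P : Finset (Finset V)) : Prop :=
  (∀ B ∈ P, B.Nonempty) ∧ ∀ v : V, ∃! B, B ∈ P ∧ v ∈ B

/-- The block of the partition `P` containing `v`. -/
def blockOf {V : Type} [DecidableEq V] (P : Finset (Finset V)) (hP : IsPartitionOf V P)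
    (v : V) : {B : Finset V // B ∈ P} :=
  ⟨Finset.choose (fun B => v ∈ B) P (hP.2 v),
    Finset.choose_mem (fun B => v ∈ B) P (hP.2 v)⟩

section Aux

open List

namespace Multigraph

variable {V E : Type} {G : Multigraph V E}

namespace Walk

/-- Append two walks. -/
def append : ∀ {u v w : V}, G.Walk u v → G.Walk v w → G.Walk u w
  | _, _, _, .nil _, q => q
  | _, _, _, .cons e h p, q => .cons e h (append p q)

lemma edges_append : ∀ {u v w : V} (p : G.Walk u v) (q : G.Walk v w),
    (p.append q).edges = p.edges ++ q.edges
  | _, _, _, .nil _, _ => rfl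
  | _, _, _, .cons e h p, q => by
      simp [append, edges, edges_append p q]

lemma verts_ne_nil : ∀ {u v : V} (p : G.Walk u v), p.verts ≠ []
  | _, _, .nil _ => by simp [verts]
  | _, _, .cons e h p => by simp [verts]

private lemma dropLast_cons_of_ne_nil {α : Type*} (a : α) {l : List α} (h : l ≠ []) :
    (a :: l).dropLast = a :: l.dropLast := by
  cases l with
  | nil => exact absurd rfl h
  | cons b t => rfl

lemma verts_append : ∀ {u v w : V} (p : G.Walk u v) (q : G.Walk v w),
    (p.append q).verts = p.verts.dropLast ++ q.verts
  | _, _, _, .nil _, _ => rfl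
  | _, _, _, .cons e h p, q => by
      simp only [append, verts, verts_append p q,
        dropLast_cons_of_ne_nil _ (verts_ne_nil p), List.cons_append]

lemma verts_concat : ∀ {u v : V} (p : G.Walk u v), p.verts = p.verts.dropLast ++ [v]
  | _, _, .nil v => rfl
  | _, _, .cons e h p => by
      simp only [verts, dropLast_cons_of_ne_nil _ (verts_ne_nil p), List.cons_append]
      exact congrArg _ (verts_concat p)

lemma start_mem_verts : ∀ {u v : V} (p : G.Walk u v), u ∈ p.verts
  | _, _, .nil v => by simp [verts]
  | _, _, .cons e h p => by simp [verts]

lemma end_mem_verts : ∀ {u v : V} (p : G.Walk u v), v ∈ p.verts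
  | _, _, .nil v => by simp [verts]
  | _, _, .cons e h p => by simp [verts, end_mem_verts p]

lemma edge_mem_verts : ∀ {u v : V} (p : G.Walk u v) {e : E}, e ∈ p.edges →
    ∀ {a b : V}, G.ends e = s(a, b) → a ∈ p.verts ∧ b ∈ p.verts
  | _, _, .nil _, e => by simp [edges]
  | _, _, .cons f hf p, e => by
      intro he a b hab
      simp only [edges, List.mem_cons] at he
      rcases he with rfl | he
      · rw [hf] at hab
        rw [Sym2.eq_iff] at hab
        simp only [verts, List.mem_cons]
        rcases hab with ⟨rfl, rfl⟩ | ⟨rfl, rfl⟩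
        · exact ⟨Or.inl rfl, Or.inr (start_mem_verts p)⟩
        · exact ⟨Or.inr (start_mem_verts p), Or.inl rfl⟩
      · obtain ⟨ha, hb⟩ := edge_mem_verts p he hab
        exact ⟨by simp [verts, ha], by simp [verts, hb]⟩

lemma IsPath.edges_nodup : ∀ {u v : V} (p : G.Walk u v), p.IsPath → p.edges.Nodup
  | _, _, .nil _, _ => by simp [edges]
  | u, v, .cons e h p, hp => by
      have hv : (Walk.cons e h p).verts = u :: p.verts := rfl
      rw [IsPath, hv, List.nodup_cons] at hp
      have hp' : p.IsPath := hp.2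
      rw [edges, List.nodup_cons]
      refine ⟨fun he => ?_, hp'.edges_nodup⟩
      exact hp.1 (edge_mem_verts p he h).1

/-- Split a walk at a vertex it visits. -/
lemma splitAtVertex : ∀ {u v : V} (p : G.Walk u v) {x : V}, x ∈ p.verts →
    ∃ (p₁ : G.Walk u x) (p₂ : G.Walk x v),
      p.edges = p₁.edges ++ p₂.edges ∧ p.verts = p₁.verts.dropLast ++ p₂.verts
  | _, v, .nil _, x => by
      intro hx
      simp only [verts, List.mem_singleton] at hx
      subst hx
      exact ⟨.nil _, .nil _, rfl, rfl⟩
  | u, v, .cons e h p, x => by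
      intro hx
      by_cases hux : x = u
      · subst hux
        exact ⟨.nil _, .cons e h p, rfl, rfl⟩
      · have hx' : x ∈ p.verts := by
          simp only [verts, List.mem_cons] at hx
          tauto
        obtain ⟨p₁, p₂, he, hv⟩ := splitAtVertex p hx'
        refine ⟨.cons e h p₁, p₂, ?_, ?_⟩
        · simp [edges, he]
        · have : (Walk.cons e h p₁).verts = u :: p₁.verts := rfl
          rw [this, dropLast_cons_of_ne_nil _ (verts_ne_nil p₁)]
          simp [verts, hv]

/-- Split a walk at an edge it uses. -/
lemma splitAtEdge : ∀ {u v : V} (p : G.Walk u v) {e : E}, e ∈ p.edges →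
    ∃ (a b : V) (_ : G.ends e = s(a, b)) (p₁ : G.Walk u a) (p₂ : G.Walk b v),
      p.edges = p₁.edges ++ e :: p₂.edges ∧ p.verts = p₁.verts ++ p₂.verts
  | _, _, .nil _, e => by simp [edges]
  | u, v, .cons f hf p, e => by
      intro he
      simp only [edges, List.mem_cons] at he
      by_cases hef : e = f
      · subst hef
        exact ⟨_, _, hf, .nil _, p, rfl, rfl⟩
      · have he' : e ∈ p.edges := he.resolve_left hef
        obtain ⟨a, b, hab, p₁, p₂, h1, h2⟩ := splitAtEdge p he'
        refine ⟨a, b, hab, .cons f hf p₁, p₂, ?_, ?_⟩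
        · simp [edges, h1]
        · have : (Walk.cons f hf p₁).verts = u :: p₁.verts := rfl
          simp [verts, h2, this]

/-- Extract a path from a walk. -/
lemma exists_path : ∀ {u v : V} (p : G.Walk u v),
    ∃ q : G.Walk u v, q.IsPath ∧ ∀ e ∈ q.edges, e ∈ p.edges
  | _, _, .nil v => ⟨.nil v, by simp [IsPath, verts], by simp⟩
  | u, v, .cons e h p => by
      obtain ⟨q, hq, hsub⟩ := exists_path p
      by_cases hu : u ∈ q.verts
      · obtain ⟨q₁, q₂, he, hv⟩ := splitAtVertex q hu
        refine ⟨q₂, ?_, fun f hfe => ?_⟩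
        · have : q.verts.Nodup := hq
          rw [hv] at this
          exact this.of_append_right
        · have : f ∈ q.edges := by rw [he]; simp [hfe]
          simp [edges, hsub f this]
      · refine ⟨.cons e h q, ?_, fun f hfe => ?_⟩
        · have : (Walk.cons e h q).verts = u :: q.verts := rfl
          rw [IsPath, this, List.nodup_cons]
          exact ⟨hu, hq⟩
        · simp only [edges, List.mem_cons] at hfe ⊢
          rcases hfe with rfl | hfe
          · exact Or.inl rfl
          · exact Or.inr (hsub f hfe)

/-- Reverse of a walk. -/
def reverse : ∀ {u v : V}, G.Walk u v → G.Walk v u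
  | _, _, .nil v => .nil v
  | _, _, .cons e h p => (reverse p).append (.cons e (by rw [h, Sym2.eq_swap]) (.nil _))

lemma edges_reverse : ∀ {u v : V} (p : G.Walk u v), p.reverse.edges = p.edges.reverse
  | _, _, .nil v => rfl
  | _, _, .cons e h p => by
      simp [reverse, edges_append, edges_reverse p, edges]

end Walk

/-! ### ReachAvoid lemmas -/

lemma ReachAvoid.trans {F : Set E} {u v w : V} (h1 : G.ReachAvoid F u v)
    (h2 : G.ReachAvoid F v w) : G.ReachAvoid F u w := by
  induction h2 with
  | refl => exact h1
  | tail e he hvw _ ih => exact ih.tail e he hvw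

lemma ReachAvoid.symm {F : Set E} {u v : V} (h : G.ReachAvoid F u v) :
    G.ReachAvoid F v u := by
  induction h with
  | refl => exact .refl _
  | tail e he hvw _ ih =>
      refine ReachAvoid.trans ?_ ih
      exact (ReachAvoid.refl _).tail e he (by rw [hvw, Sym2.eq_swap])

lemma reach_of_walk {F : Set E} {u v : V} (p : G.Walk u v)
    (hp : ∀ e ∈ p.edges, e ∉ F) : G.ReachAvoid F u v := by
  induction p with
  | nil v => exact .refl v
  | cons e h p ih =>
      have h1 : G.ReachAvoid F _ _ := (ReachAvoid.refl _).tail e (hp e (by simp [Walk.edges])) h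
      exact h1.trans (ih fun f hf => hp f (by simp [Walk.edges, hf]))

lemma walk_of_reach {F : Set E} {u v : V} (h : G.ReachAvoid F u v) :
    ∃ p : G.Walk u v, ∀ e ∈ p.edges, e ∉ F := by
  induction h with
  | refl => exact ⟨.nil _, by simp [Walk.edges]⟩
  | tail e he hvw _ ih =>
      obtain ⟨p, hp⟩ := ih
      refine ⟨p.append (.cons e hvw (.nil _)), fun f hf => ?_⟩
      rw [Walk.edges_append] at hf
      simp only [List.mem_append, Walk.edges, List.mem_singleton, List.mem_cons,
        List.not_mem_nil, or_false] at hf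
      rcases hf with hf | rfl
      · exact hp f hf
      · exact he

lemma path_of_reach {F : Set E} {u v : V} (h : G.ReachAvoid F u v) :
    ∃ p : G.Walk u v, p.IsPath ∧ ∀ e ∈ p.edges, e ∉ F := by
  obtain ⟨p, hp⟩ := walk_of_reach h
  obtain ⟨q, hq, hsub⟩ := p.exists_path
  exact ⟨q, hq, fun e he => hp e (hsub e he)⟩

end Multigraph

end Aux

section Aux2

namespace Multigraph

variable {V E : Type} {G : Multigraph V E}

open Walk

lemma exists_first_edge {s t : V} (q : G.Walk s t) (hst : s ≠ t) :
    ∃ f ∈ q.edges, ∃ z, G.ends f = s(s, z) := by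
  cases q with
  | nil => exact absurd rfl hst
  | cons f hf q' => exact ⟨f, by simp [Walk.edges], _, hf⟩

lemma path_nil_edges {s t : V} (q : G.Walk s t) (hq : q.IsPath) (hst : s = t) :
    q.edges = [] := by
  cases q with
  | nil => rfl
  | cons g hg q' =>
      exfalso
      have hv : (Walk.cons g hg q').verts = s :: q'.verts := rfl
      rw [Walk.IsPath, hv, List.nodup_cons] at hq
      exact hq.1 (hst ▸ q'.end_mem_verts)

/-- Removing an edge from a simple cycle leaves a path joining its endpoints. -/
lemma cycleSplit {u : V} {c : G.Walk u u} (hndE : c.edges.Nodup)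
    (hndV : c.verts.dropLast.Nodup) {e : E} (he : e ∈ c.edges) {a b : V}
    (hab : G.ends e = s(a, b)) :
    ∃ (a' b' : V) (q : G.Walk b' a'), s(a', b') = s(a, b) ∧ q.IsPath ∧
      (∀ f, f ∈ q.edges ↔ f ∈ c.edges ∧ f ≠ e) := by
  obtain ⟨a', b', hab', p₁, p₂, hE, hV⟩ := c.splitAtEdge he
  have hnd2 : (p₁.verts ++ p₂.verts.dropLast).Nodup := by
    have := hndV
    rw [hV, List.dropLast_append_of_ne_nil p₂.verts_ne_nil] at this
    exact this
  refine ⟨a', b', p₂.append p₁, by rw [← hab', hab], ?_, ?_⟩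
  · rw [Walk.IsPath, Walk.verts_append]
    exact (List.perm_append_comm.nodup_iff).mpr hnd2
  · intro f
    rw [Walk.edges_append, hE]
    rw [hE] at hndE
    simp only [List.nodup_append, List.nodup_cons] at hndE
    obtain ⟨hnd₁, ⟨hep₂, hnd₂⟩, hdisj⟩ := hndE
    have hep₁ : e ∉ p₁.edges := fun hh => hdisj _ hh _ (by simp) rfl
    constructor
    · intro hf
      rcases List.mem_append.mp hf with hf | hf
      · exact ⟨by simp [hf], fun hh => hep₂ (hh ▸ hf)⟩
      · exact ⟨by simp [hf], fun hh => hep₁ (hh ▸ hf)⟩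
    · rintro ⟨hf, hfe⟩
      rcases List.mem_append.mp hf with hf | hf
      · exact List.mem_append.mpr (Or.inr hf)
      · rcases List.mem_cons.mp hf with hf | hf
        · exact absurd hf hfe
        · exact List.mem_append.mpr (Or.inl hf)

lemma cycle_loop {u : V} {c : G.Walk u u} (hndE : c.edges.Nodup)
    (hndV : c.verts.dropLast.Nodup) {e : E} (he : e ∈ c.edges) {a : V}
    (haa : G.ends e = s(a, a)) : ∀ f ∈ c.edges, f = e := by
  obtain ⟨a', b', q, hab', hqpath, hqmem⟩ := cycleSplit hndE hndV he haa
  have h1 : a' = a ∧ b' = a := by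
    rcases Sym2.eq_iff.mp hab' with ⟨h1, h2⟩ | ⟨h1, h2⟩ <;> exact ⟨h1, h2⟩
  have hq : q.edges = [] := path_nil_edges q hqpath (h1.2.trans h1.1.symm)
  intro f hf
  by_contra hfe
  have : f ∈ q.edges := (hqmem f).mpr ⟨hf, hfe⟩
  rw [hq] at this
  exact absurd this (by simp)

/-- Two vertices on a cycle are joined by two edge-disjoint walks along the cycle. -/
lemma two_arcs {u x y : V} (c : G.Walk u u) (hndE : c.edges.Nodup)
    (hx : x ∈ c.verts) (hy : y ∈ c.verts) :
    ∃ (W₁ W₂ : G.Walk x y), (∀ g ∈ W₁.edges, g ∈ c.edges) ∧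
      (∀ g ∈ W₂.edges, g ∈ c.edges) ∧ ∀ g ∈ W₁.edges, g ∉ W₂.edges := by
  obtain ⟨p₁, p₂, hE, hV⟩ := c.splitAtVertex hx
  rw [hE] at hndE
  simp only [List.nodup_append] at hndE
  obtain ⟨hnd₁, hnd₂, hdisj⟩ := hndE
  by_cases hy2 : y ∈ p₂.verts
  · obtain ⟨q₁, q₂, hE2, hV2⟩ := p₂.splitAtVertex hy2
    rw [hE2] at hnd₂ hdisj
    simp only [List.nodup_append] at hnd₂
    refine ⟨q₁, (q₂.append p₁).reverse, ?_, ?_, ?_⟩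
    · intro g hg; rw [hE, hE2]; simp [hg]
    · intro g hg
      rw [Walk.edges_reverse, List.mem_reverse, Walk.edges_append, List.mem_append] at hg
      rw [hE, hE2]
      rcases hg with hg | hg <;> simp [hg]
    · intro g hg hg'
      rw [Walk.edges_reverse, List.mem_reverse, Walk.edges_append, List.mem_append] at hg'
      rcases hg' with hg' | hg'
      · exact hnd₂.2.2 _ hg _ hg' rfl
      · exact hdisj _ hg' _ (List.mem_append.mpr (Or.inl hg)) rfl
  · have hy1 : y ∈ p₁.verts := by
      rw [hV, List.mem_append] at hy
      rcases hy with hy | hy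
      · exact (List.dropLast_sublist p₁.verts).mem hy
      · exact absurd hy hy2
    obtain ⟨q₁, q₂, hE2, hV2⟩ := p₁.splitAtVertex hy1
    rw [hE2] at hnd₁ hdisj
    simp only [List.nodup_append] at hnd₁
    refine ⟨q₂.reverse, p₂.append q₁, ?_, ?_, ?_⟩
    · intro g hg
      rw [Walk.edges_reverse, List.mem_reverse] at hg
      rw [hE, hE2]; simp [hg]
    · intro g hg
      rw [Walk.edges_append, List.mem_append] at hg
      rw [hE, hE2]
      rcases hg with hg | hg <;> simp [hg]
    · intro g hg hg'
      rw [Walk.edges_reverse, List.mem_reverse] at hg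
      rw [Walk.edges_append, List.mem_append] at hg'
      rcases hg' with hg' | hg'
      · exact hdisj _ (List.mem_append.mpr (Or.inr hg)) _ hg' rfl
      · exact hnd₁.2.2 _ hg' _ hg rfl

/-- Maximal prefix of a walk avoiding the edges of `c`. -/
lemma prefix_lemma {u : V} (c : G.Walk u u) :
    ∀ {m t : V} (q : G.Walk m t), t ∈ c.verts →
      ∃ (y : V) (P : G.Walk m y), y ∈ c.verts ∧ y ∈ q.verts ∧
        ∀ g ∈ P.edges, g ∉ c.edges
  | _, _, .nil t => fun ht => ⟨t, .nil t, ht, by simp [Walk.verts], by simp [Walk.edges]⟩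
  | m, t, .cons g hg q' => by
      intro ht
      by_cases hgc : g ∈ c.edges
      · refine ⟨m, .nil m, (c.edge_mem_verts hgc hg).1, ?_, by simp [Walk.edges]⟩
        simp [Walk.verts]
      · obtain ⟨y, P', hyc, hyq, hP'⟩ := prefix_lemma c q' ht
        refine ⟨y, .cons g hg P', hyc, ?_, ?_⟩
        · simp [Walk.verts, hyq]
        · intro f hf
          rcases List.mem_cons.mp hf with rfl | hf
          · exact hgc
          · exact hP' f hf

/-- Excursion lemma: a path between two vertices of `c` using an edge not on `c`
contains a nonempty sub-path off `c` joining two distinct vertices of `c`. -/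
lemma excursion {u : V} (c : G.Walk u u) :
    ∀ {s t : V} (q : G.Walk s t), q.verts.Nodup → s ∈ c.verts → t ∈ c.verts →
      (∃ f ∈ q.edges, f ∉ c.edges) →
      ∃ (x y : V), x ≠ y ∧ x ∈ c.verts ∧ y ∈ c.verts ∧
        ∃ P : G.Walk x y, P.edges ≠ [] ∧ ∀ g ∈ P.edges, g ∉ c.edges
  | _, _, .nil t => by
      rintro _ _ _ ⟨f, hf, -⟩
      exact absurd hf (by simp [Walk.edges])
  | s, t, .cons g hg q' => by
      rintro hnd hs ht ⟨f, hf, hfc⟩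
      have hnd' : (s :: q'.verts).Nodup := hnd
      rw [List.nodup_cons] at hnd'
      by_cases hgc : g ∈ c.edges
      · have hm : _ ∈ c.verts := (c.edge_mem_verts hgc hg).2
        have hff : f ∈ q'.edges := by
          rcases List.mem_cons.mp hf with rfl | hf
          · exact absurd hgc hfc
          · exact hf
        exact excursion c q' hnd'.2 hm ht ⟨f, hff, hfc⟩
      · obtain ⟨y, P', hyc, hyq, hP'⟩ := prefix_lemma c q' ht
        refine ⟨s, y, fun hh => hnd'.1 (hh ▸ hyq), hs, hyc,
          .cons g hg P', by simp [Walk.edges], ?_⟩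
        intro f' hf'
        rcases List.mem_cons.mp hf' with rfl | hf'
        · exact hgc
        · exact hP' f' hf'

/-- Closing up a path with an edge gives a simple cycle. -/
lemma cycle_of_path_edge {v x : V} (r : G.Walk v x) (hr : r.IsPath) {e : E}
    [DecidableEq E] (hxv : G.ends e = s(x, v)) (her : e ∉ r.edges) :
    ∃ S, G.IsSimpleCycleOn S ∧ e ∈ S ∧ ∀ f ∈ S, f = e ∨ f ∈ r.edges := by
  set D := r.append (.cons e hxv (.nil v)) with hD
  have hed : D.edges = r.edges ++ [e] := by
    rw [hD, Walk.edges_append]; rfl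
  have hvd : D.verts = r.verts.dropLast ++ [x, v] := by
    rw [hD, Walk.verts_append]; rfl
  refine ⟨D.edges.toFinset, ⟨v, D, ?_, ?_, ?_, rfl⟩, ?_, ?_⟩
  · rw [hed]; simp
  · rw [hed]
    simp [List.nodup_append, her, hr.edges_nodup r]
    exact fun a ha hae => her (hae ▸ ha)
  · rw [hvd, List.dropLast_append_of_ne_nil (l := [x, v]) (by simp)]
    have : ([x, v] : List V).dropLast = [x] := rfl
    rw [this, ← r.verts_concat]
    exact hr
  · rw [hed]; simp
  · intro f hf
    rw [hed] at hf
    simp only [List.toFinset_append, Finset.mem_union, List.mem_toFinset,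
      List.toFinset_cons, List.toFinset_nil, LawfulSingleton.insert_empty_eq, Finset.mem_singleton] at hf
    tauto

lemma edgeConn_one_or_two (hconn : G.Connected) [Fintype E] {v w : V}
    (F : Finset E) (hcut : G.IsEdgeCut v w ↑F) (hc : F.card ≤ 2) :
    G.edgeConn v w = 1 ∨ G.edgeConn v w = 2 := by
  have hmem : F.card ∈ {k : ℕ | ∃ F : Finset E, F.card = k ∧ G.IsEdgeCut v w ↑F} :=
    ⟨F, rfl, hcut⟩
  have hle : G.edgeConn v w ≤ F.card := Nat.sInf_le hmem
  have h0 : G.edgeConn v w ≠ 0 := by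
    intro h
    rcases (Nat.sInf_eq_zero.mp h) with h | h
    · obtain ⟨F₀, h₀, hcut₀⟩ := h
      rw [Finset.card_eq_zero] at h₀
      subst h₀
      exact hcut₀ (by simpa using hconn v w)
    · rw [Set.eq_empty_iff_forall_notMem] at h
      exact h _ hmem
  unfold edgeConn at *
  omega

lemma exists_small_cut [Fintype E] {v w : V}
    (h : G.edgeConn v w = 1 ∨ G.edgeConn v w = 2) :
    ∃ F : Finset E, F.card ≤ 2 ∧ G.IsEdgeCut v w ↑F := by
  have hne : {k : ℕ | ∃ F : Finset E, F.card = k ∧ G.IsEdgeCut v w ↑F}.Nonempty := by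
    by_contra hc
    rw [Set.not_nonempty_iff_eq_empty] at hc
    unfold edgeConn at h
    rw [hc] at h
    simp at h
  obtain ⟨F, hcard, hcut⟩ := Nat.sInf_mem hne
  refine ⟨F, ?_, hcut⟩
  unfold edgeConn at h
  omega

end Multigraph

end Aux2

namespace Multigraph

variable {V E : Type} {G : Multigraph V E}

lemma first_edge_decomp {v w : V} (p : G.Walk v w) (hp : p.IsPath) (hvw : v ≠ w) :
    ∃ (x : V) (e : E) (_ : G.ends e = s(v, x)) (p' : G.Walk x w),
      p'.IsPath ∧ e ∉ p'.edges ∧ v ∉ p'.verts ∧ v ≠ x := by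
  cases p with
  | nil => exact absurd rfl hvw
  | cons e h p' =>
    rename_i x
    have hv : (Walk.cons e h p').verts = v :: p'.verts := rfl
    rw [Walk.IsPath, hv, List.nodup_cons] at hp
    have hvnp : v ∉ p'.verts := hp.1
    refine ⟨x, e, h, p', hp.2, ?_, hvnp, ?_⟩
    · intro he
      exact hvnp (p'.edge_mem_verts he h).1
    · intro hh
      exact hvnp (hh ▸ p'.start_mem_verts)

end Multigraph

/-- A finite connected multigraph is a quasi-cactus (every edge belongs
to at most one simple cycle) iff `λ(v, w) ∈ {1, 2}` for every pair of distinct vertices. -/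
theorem stmt_8 {V E : Type} [Nonempty V] [Fintype V] [Fintype E] [DecidableEq E]
    (G : Multigraph V E) (hconn : G.Connected) :
    (∀ (e : E) (S S' : Finset E), G.IsSimpleCycleOn S → G.IsSimpleCycleOn S' →
        e ∈ S → e ∈ S' → S = S') ↔
      ∀ v w : V, v ≠ w → G.edgeConn v w = 1 ∨ G.edgeConn v w = 2 := by
  constructor
  · -- quasi-cactus implies small edge connectivity
    intro huniq v w hvw
    obtain ⟨p, hp, -⟩ := Multigraph.path_of_reach (hconn v w)
    obtain ⟨x, e, h, p', hp', hep', hvnp, hvx⟩ := Multigraph.first_edge_decomp p hp hvw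
    have hens' : G.ends e = s(x, v) := by rw [h, Sym2.eq_swap]
    by_cases hcyc : ∃ S, G.IsSimpleCycleOn S ∧ e ∈ S
    · obtain ⟨S, hS, heS⟩ := hcyc
      obtain ⟨u, c, hcne, hndE, hndV, hfin⟩ := hS
      have hec : e ∈ c.edges := by rw [← List.mem_toFinset, hfin]; exact heS
      obtain ⟨a', b', q, hab', hqpath, hqmem⟩ := Multigraph.cycleSplit hndE hndV hec h
      obtain ⟨e', he'q, z, he'z⟩ : ∃ e' ∈ q.edges, ∃ z, G.ends e' = s(v, z) := by
        rcases Sym2.eq_iff.mp hab' with ⟨h1, h2⟩ | ⟨h1, h2⟩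
        · subst h1; subst h2
          obtain ⟨f, hfm, z, hz⟩ := Multigraph.exists_first_edge q.reverse hvx
          rw [Multigraph.Walk.edges_reverse, List.mem_reverse] at hfm
          exact ⟨f, hfm, z, hz⟩
        · subst h1; subst h2
          exact Multigraph.exists_first_edge q hvx
      have he'c := (hqmem e').mp he'q
      have he'S : e' ∈ S := by rw [← hfin]; exact List.mem_toFinset.mpr he'c.1
      have hcut : G.IsEdgeCut v w ↑({e, e'} : Finset E) := by
        intro hreach
        have hp'avoid : ∀ f ∈ p'.edges, f ∉ (↑({e, e'} : Finset E) : Set E) := by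
          intro f hf hfF
          simp only [Finset.coe_insert, Set.mem_insert_iff, Finset.coe_singleton,
            Set.mem_singleton_iff] at hfF
          rcases hfF with rfl | rfl
          · exact hep' hf
          · exact hvnp (p'.edge_mem_verts hf he'z).1
        have h1 := Multigraph.reach_of_walk p' hp'avoid
        have h2 : G.ReachAvoid _ v x := hreach.trans h1.symm
        obtain ⟨r, hrpath, hravoid⟩ := Multigraph.path_of_reach h2
        have hernot : e ∉ r.edges := fun hh => hravoid e hh (by simp)
        obtain ⟨S', hS', heS', hsub⟩ := Multigraph.cycle_of_path_edge r hrpath hens' hernot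
        have hSS : S' = S := huniq e S' S hS' ⟨u, c, hcne, hndE, hndV, hfin⟩ heS' heS
        have he'S' : e' ∈ S' := hSS ▸ he'S
        rcases hsub e' he'S' with hh | hh
        · exact he'c.2 hh
        · exact hravoid e' hh (by simp)
      exact Multigraph.edgeConn_one_or_two hconn _ hcut
        ((Finset.card_insert_le _ _).trans (by simp))
    · have hcut : G.IsEdgeCut v w ↑({e} : Finset E) := by
        intro hreach
        have hp'avoid : ∀ f ∈ p'.edges, f ∉ (↑({e} : Finset E) : Set E) := by
          intro f hf hfF
          simp only [Finset.coe_singleton, Set.mem_singleton_iff] at hfF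
          subst hfF
          exact hep' hf
        have h1 := Multigraph.reach_of_walk p' hp'avoid
        have h2 : G.ReachAvoid _ v x := hreach.trans h1.symm
        obtain ⟨r, hrpath, hravoid⟩ := Multigraph.path_of_reach h2
        obtain ⟨S', hS', heS', -⟩ := Multigraph.cycle_of_path_edge r hrpath hens'
          (fun hh => hravoid e hh (by simp))
        exact hcyc ⟨S', hS', heS'⟩
      exact Multigraph.edgeConn_one_or_two hconn _ hcut (by simp)
  · -- small edge connectivity implies quasi-cactus
    intro hl e S S' hS hS' heS heS'
    have key : ∀ (T T' : Finset E), G.IsSimpleCycleOn T → G.IsSimpleCycleOn T' →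
        e ∈ T → e ∈ T' → ∀ f ∈ T', f ∉ T → False := by
      rintro T T' ⟨u, c, hcne, hndE, hndV, hfin⟩ ⟨u', c', hcne', hndE', hndV', hfin'⟩
        heT heT' f hfT' hfT
      have hec : e ∈ c.edges := by rw [← List.mem_toFinset, hfin]; exact heT
      have hec' : e ∈ c'.edges := by rw [← List.mem_toFinset, hfin']; exact heT'
      have hfc' : f ∈ c'.edges := by rw [← List.mem_toFinset, hfin']; exact hfT'
      have hfc : f ∉ c.edges := fun hh => hfT (by rw [← hfin]; exact List.mem_toFinset.mpr hh)
      obtain ⟨a, b, hab⟩ : ∃ a b, G.ends e = s(a, b) := by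
        obtain ⟨⟨a, b⟩, hab⟩ := Quot.exists_rep (G.ends e)
        exact ⟨a, b, hab.symm⟩
      by_cases hloop : a = b
      · subst hloop
        have := Multigraph.cycle_loop hndE' hndV' hec' hab f hfc'
        exact hfT (this ▸ heT)
      · obtain ⟨a₂, b₂, q', hab₂, hq'path, hq'mem⟩ :=
          Multigraph.cycleSplit hndE' hndV' hec' hab
        have hendc : b₂ ∈ c.verts ∧ a₂ ∈ c.verts := by
          have h1 := c.edge_mem_verts hec hab
          rcases Sym2.eq_iff.mp hab₂ with ⟨h2, h3⟩ | ⟨h2, h3⟩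
          · exact ⟨h3 ▸ h1.2, h2 ▸ h1.1⟩
          · exact ⟨h3 ▸ h1.1, h2 ▸ h1.2⟩
        have hfq' : f ∈ q'.edges := (hq'mem f).mpr ⟨hfc', fun hh => hfT (hh ▸ heT)⟩
        obtain ⟨x, y, hxy, hxc, hyc, P, hPne, hPav⟩ :=
          Multigraph.excursion c q' hq'path hendc.1 hendc.2 ⟨f, hfq', hfc⟩
        obtain ⟨W₁, W₂, hW₁, hW₂, hdisj⟩ := Multigraph.two_arcs c hndE hxc hyc
        obtain ⟨F, hFcard, hFcut⟩ := Multigraph.exists_small_cut (hl x y hxy)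
        apply hFcut
        by_cases h1 : ∀ g ∈ W₁.edges, g ∉ (↑F : Set E)
        · exact Multigraph.reach_of_walk W₁ h1
        by_cases h2 : ∀ g ∈ W₂.edges, g ∉ (↑F : Set E)
        · exact Multigraph.reach_of_walk W₂ h2
        by_cases h3 : ∀ g ∈ P.edges, g ∉ (↑F : Set E)
        · exact Multigraph.reach_of_walk P h3
        exfalso
        push_neg at h1 h2 h3
        obtain ⟨g₁, hg₁, hg₁F⟩ := h1
        obtain ⟨g₂, hg₂, hg₂F⟩ := h2
        obtain ⟨g₃, hg₃, hg₃F⟩ := h3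
        have h12 : g₁ ≠ g₂ := fun hh => hdisj g₁ hg₁ (hh ▸ hg₂)
        have h13 : g₁ ≠ g₃ := fun hh => hPav g₃ hg₃ (hh ▸ hW₁ g₁ hg₁)
        have h23 : g₂ ≠ g₃ := fun hh => hPav g₃ hg₃ (hh ▸ hW₂ g₂ hg₂)
        have hsub : ({g₁, g₂, g₃} : Finset E) ⊆ F := by
          intro g hg
          simp only [Finset.mem_insert, Finset.mem_singleton] at hg
          rcases hg with rfl | rfl | rfl
          · exact hg₁F
          · exact hg₂F
          · exact hg₃F
        have hcard3 : ({g₁, g₂, g₃} : Finset E).card = 3 := by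
          rw [Finset.card_insert_of_notMem (by simp [h12, h13]),
            Finset.card_insert_of_notMem (by simp [h23]), Finset.card_singleton]
        have := Finset.card_le_card hsub
        omega
    by_cases hss : S' ⊆ S
    · by_cases hss2 : S ⊆ S'
      · exact Finset.Subset.antisymm hss2 hss
      · obtain ⟨f, hf1, hf2⟩ := Finset.not_subset.mp hss2
        exact (key S' S hS' hS heS' heS f hf1 hf2).elim
    · obtain ⟨f, hf1, hf2⟩ := Finset.not_subset.mp hss
      exact (key S S' hS hS' heS heS' f hf1 hf2).elim
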